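/- arXiv:0909.4863 — 5 statements merged into one kernel-verified Lean document; each statement's English description precedes it below -/
import Mathlib

section
/- Let R be a commutative ring and E a nonzero R-module. Then R, viewed as a module over the trivial ring extension R⋉E via the projection map ε(r,e)=r, is never a projective R⋉E-module. -/
open CategoryTheory TrivSqZeroExt

noncomputable section

universe u

/-- The canonical projection `ε : R⋉E → R`, `ε (r, e) = r`. -/
def paperEps (R E : Type u) [CommRing R] [AddCommGroup E] [Module R E]
    [Module Rᵐᵒᵖ E] [IsCentralScalar R E] : TrivSqZeroExt R E →+* R :=
  (TrivSqZeroExt.fstHom R R E).toRingHom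

theorem stmt0 (R E : Type u) [CommRing R] [AddCommGroup E] [Module R E]
    [Module Rᵐᵒᵖ E] [IsCentralScalar R E] (hE : Nontrivial E) :
    ¬ @Module.Projective (TrivSqZeroExt R E) _ R _ (Module.compHom R (paperEps R E)) := by
  intro hproj
  letI : Module (TrivSqZeroExt R E) R := Module.compHom R (paperEps R E)
  set A := TrivSqZeroExt R E with hA
  let f : A →ₗ[A] R :=
    { toFun := fun a => a.fst
      map_add' := fun a b => rfl
      map_smul' := fun a b => rfl }
  have hsurj : Function.Surjective f := fun r => ⟨TrivSqZeroExt.inl r, rfl⟩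
  obtain ⟨s, hs⟩ := Module.projective_lifting_property f (LinearMap.id) hsurj
  obtain ⟨x, hx⟩ := exists_ne (0 : E)
  have h1 : (s 1).fst = 1 := congrArg (fun g => g 1) hs
  have h2 : (TrivSqZeroExt.inr x : A) • (1 : R) = 0 := by
    show (paperEps R E (TrivSqZeroExt.inr x)) * 1 = 0
    simp [paperEps]
  have h3 : s ((TrivSqZeroExt.inr x : A) • (1 : R))
      = (TrivSqZeroExt.inr x : A) • s 1 := s.map_smul _ _
  rw [h2, map_zero] at h3
  have h4 : ((TrivSqZeroExt.inr x : A) • s 1).snd = x := by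
    show ((TrivSqZeroExt.inr x : A) * s 1).snd = x
    rw [TrivSqZeroExt.snd_mul]
    simp [h1]
  rw [← h3] at h4
  simp at h4
  exact hx h4.symm
end
end

section
/- Let R be a commutative ring and x ∈ R a nonzerodivisor. Then there is a short exact sequence of R⋉xR-modules 0 → R → R⋉xR → 0×xR → 0, where the first map is μ(r)=(0,xr) and the second is ν(r,xr')=(0,xr), with R regarded as an R⋉xR-module via ε(r,e)=r. -/
open CategoryTheory TrivSqZeroExt

noncomputable section

universe u

set_option synthInstance.maxHeartbeats 1000000 in
set_option maxHeartbeats 1000000 in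
theorem stmt4 (R : Type u) [CommRing R] (x : R) (hx : x ∈ nonZeroDivisors R) :
    letI : Module (TrivSqZeroExt R (Ideal.span {x} : Ideal R)) R :=
      Module.compHom R (paperEps R (Ideal.span {x} : Ideal R))
    ∃ (μ : R →ₗ[TrivSqZeroExt R (Ideal.span {x} : Ideal R)]
          TrivSqZeroExt R (Ideal.span {x} : Ideal R))
      (ν : TrivSqZeroExt R (Ideal.span {x} : Ideal R) →ₗ[TrivSqZeroExt R (Ideal.span {x} : Ideal R)]
          TrivSqZeroExt R (Ideal.span {x} : Ideal R)),
      (∀ r : R, μ r = TrivSqZeroExt.inr ⟨x * r, Ideal.mem_span_singleton.mpr (dvd_mul_right x r)⟩) ∧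
      (∀ p : TrivSqZeroExt R (Ideal.span {x} : Ideal R),
        ν p = TrivSqZeroExt.inr ⟨x * TrivSqZeroExt.fst p,
          Ideal.mem_span_singleton.mpr (dvd_mul_right x _)⟩) ∧
      Function.Injective μ ∧ Function.Exact μ ν ∧
      Set.range ν = {p : TrivSqZeroExt R (Ideal.span {x} : Ideal R) | TrivSqZeroExt.fst p = 0} := by
  letI inst : Module (TrivSqZeroExt R (Ideal.span {x} : Ideal R)) R :=
    Module.compHom R (paperEps R (Ideal.span {x} : Ideal R))
  show ∃ (μ : R →ₗ[TrivSqZeroExt R (Ideal.span {x} : Ideal R)]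
          TrivSqZeroExt R (Ideal.span {x} : Ideal R))
      (ν : _ →ₗ[TrivSqZeroExt R (Ideal.span {x} : Ideal R)] _), _
  have hsmul : ∀ (s : TrivSqZeroExt R (Ideal.span {x} : Ideal R)) (r : R),
      s • r = s.fst * r := fun s r => rfl
  refine ⟨{ toFun := fun r => TrivSqZeroExt.inr ⟨x * r, Ideal.mem_span_singleton.mpr (dvd_mul_right x r)⟩
            map_add' := ?_
            map_smul' := ?_ },
          { toFun := fun p => TrivSqZeroExt.inr ⟨x * p.fst, Ideal.mem_span_singleton.mpr (dvd_mul_right x _)⟩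
            map_add' := ?_
            map_smul' := ?_ }, fun r => rfl, fun p => rfl, ?_, ?_, ?_⟩
  · intro a b
    ext <;> simp [mul_add]
  · intro s r
    ext
    · simp
    · simp [hsmul, smul_comm, mul_left_comm]
  · intro a b
    ext <;> simp [mul_add]
  · intro s p
    ext
    · simp
    · simp [mul_left_comm]
  · -- injectivity
    intro a b hab
    simp only [LinearMap.coe_mk, AddHom.coe_mk] at hab
    have := congrArg TrivSqZeroExt.snd hab
    simp only [TrivSqZeroExt.snd_inr, Subtype.mk.injEq] at this
    have h0 : (a - b) * x = 0 := by linear_combination this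
    exact sub_eq_zero.mp (hx.2 _ h0)
  · -- exactness
    intro p
    simp only [LinearMap.coe_mk, AddHom.coe_mk, Set.mem_range]
    constructor
    · rintro hp
      have h1 : x * p.fst = 0 := by
        have := congrArg TrivSqZeroExt.snd hp
        simpa using this
      have hfst : p.fst = 0 := hx.2 _ (by rwa [mul_comm] at h1)
      obtain ⟨r', hr'⟩ := Ideal.mem_span_singleton.mp p.snd.2
      refine ⟨r', ?_⟩
      ext
      · simp [hfst]
      · simp [← hr']
    · rintro ⟨r, rfl⟩
      ext <;> simp
  · ext p
    simp only [Set.mem_range, LinearMap.coe_mk, AddHom.coe_mk, Set.mem_setOf_eq]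
    constructor
    · rintro ⟨q, rfl⟩; simp
    · intro hp
      obtain ⟨r', hr'⟩ := Ideal.mem_span_singleton.mp p.snd.2
      refine ⟨TrivSqZeroExt.inl r', ?_⟩
      ext
      · simp [hp]
      · simp [← hr']
end
end

section
/- Let R be a commutative ring, E an R-module, and M an R-module. Then pd_R(M) ≤ pd_{R⋉E}(M), where M is an R⋉E-module via the ring surjection ε: R⋉E → R. -/
open CategoryTheory TrivSqZeroExt

noncomputable section

universe u

/-- `M` has a left resolution of length `≤ n` by modules satisfying `P`. -/
def HasLeftResLE (R : Type u) [CommRing R] (P : ModuleCat.{u} R → Prop)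
    (M : Type u) [AddCommGroup M] [Module R M] (n : ℕ) : Prop :=
  ∃ (G : ℕ → ModuleCat.{u} R) (d : ∀ i, G (i + 1) ⟶ G i) (aug : G 0 ⟶ ModuleCat.of R M),
    (∀ i, P (G i)) ∧ (∀ i, n < i → Subsingleton (G i)) ∧
    Function.Surjective aug ∧ Function.Exact (d 0) aug ∧
    ∀ i, Function.Exact (d (i + 1)) (d i)

/-- `M` has a right (co)resolution of length `≤ n` by modules satisfying `P`. -/
def HasRightResLE (R : Type u) [CommRing R] (P : ModuleCat.{u} R → Prop)
    (M : Type u) [AddCommGroup M] [Module R M] (n : ℕ) : Prop :=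
  ∃ (G : ℕ → ModuleCat.{u} R) (d : ∀ i, G i ⟶ G (i + 1)) (aug : ModuleCat.of R M ⟶ G 0),
    (∀ i, P (G i)) ∧ (∀ i, n < i → Subsingleton (G i)) ∧
    Function.Injective aug ∧ Function.Exact aug (d 0) ∧
    ∀ i, Function.Exact (d i) (d (i + 1))

/-- Projective dimension of `M` over `R`, as an element of `ℕ∞`. -/
def projDim (R : Type u) [CommRing R] (M : Type u) [AddCommGroup M] [Module R M] : ℕ∞ :=
  sInf ((fun n : ℕ => (n : ℕ∞)) '' {n : ℕ | HasLeftResLE R (fun N => Module.Projective R N) M n})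

/-- Flat dimension of `M` over `R`, as an element of `ℕ∞`. -/
def flatDim (R : Type u) [CommRing R] (M : Type u) [AddCommGroup M] [Module R M] : ℕ∞ :=
  sInf ((fun n : ℕ => (n : ℕ∞)) '' {n : ℕ | HasLeftResLE R (fun N => Module.Flat R N) M n})

/-- Injective dimension of `M` over `R`, as an element of `ℕ∞`. -/
def injDim (R : Type u) [CommRing R] (M : Type u) [AddCommGroup M] [Module R M] : ℕ∞ :=
  sInf ((fun n : ℕ => (n : ℕ∞)) '' {n : ℕ | HasRightResLE R (fun N => Module.Injective R N) M n})

/-! ### Auxiliary material for the proof of `stmt8`. -/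

namespace Stmt8Aux

/-! #### Generic lemmas about `HasLeftResLE` over any commutative ring -/

section General
variable {T : Type u} [CommRing T]

theorem projective_of_subsingleton (N : Type u) [AddCommGroup N] [Module T N] [Subsingleton N] :
    Module.Projective T N :=
  Module.projective_def.mpr ⟨0, fun x => Subsingleton.elim _ x⟩

theorem hasLeftResLE_of_projective (X : Type u) [AddCommGroup X] [Module T X]
    (hX : Module.Projective T X) (n : ℕ) :
    HasLeftResLE T (fun N => Module.Projective T N) X n := by
  refine ⟨fun i => match i with | 0 => ModuleCat.of T X | _+1 => ModuleCat.of T PUnit,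
    fun i => 0, 𝟙 (ModuleCat.of T X), ?_, ?_, ?_, ?_, ?_⟩
  · intro i
    match i with
    | 0 => exact hX
    | (i+1) => exact projective_of_subsingleton PUnit
  · intro i hi
    match i with
    | (i+1) => exact inferInstanceAs (Subsingleton PUnit)
  · exact fun x => ⟨x, rfl⟩
  · intro y
    constructor
    · intro hy
      exact ⟨0, by simpa using hy.symm⟩
    · rintro ⟨z, rfl⟩
      simp only [ModuleCat.id_apply]
      rfl
  · intro i y
    constructor
    · intro _
      exact ⟨0, Subsingleton.elim _ _⟩
    · intro _
      have h0 : y = 0 := Subsingleton.elim y 0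
      rw [h0]
      exact map_zero _

theorem HasLeftResLE.mono {P : ModuleCat.{u} T → Prop} {X : Type u} [AddCommGroup X] [Module T X]
    {n n' : ℕ} (h : HasLeftResLE T P X n) (hn : n ≤ n') : HasLeftResLE T P X n' := by
  obtain ⟨G, d, aug, h1, h2, h3, h4, h5⟩ := h
  exact ⟨G, d, aug, h1, fun i hi => h2 i (lt_of_le_of_lt hn hi), h3, h4, h5⟩

theorem HasLeftResLE.prepend {P : ModuleCat.{u} T → Prop}
    {X X' F : Type u} [AddCommGroup X] [Module T X] [AddCommGroup X'] [Module T X']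
    [AddCommGroup F] [Module T F] (hF : P (ModuleCat.of T F))
    (π : F →ₗ[T] X) (ι : X' →ₗ[T] F) (hπ : Function.Surjective π) (hι : Function.Injective ι)
    (hexa : Function.Exact ι π) {n : ℕ} (h : HasLeftResLE T P X' n) :
    HasLeftResLE T P X (n + 1) := by
  obtain ⟨G, d, aug, h1, h2, h3, h4, h5⟩ := h
  refine ⟨fun i => match i with | 0 => ModuleCat.of T F | i+1 => G i,
    fun i => match i with
      | 0 => ModuleCat.ofHom (ι.comp (aug.hom : (G 0 : Type u) →ₗ[T] X'))
      | i+1 => d i,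
    ModuleCat.ofHom π, ?_, ?_, hπ, ?_, ?_⟩
  · intro i
    match i with
    | 0 => exact hF
    | (i+1) => exact h1 i
  · intro i hi
    match i, hi with
    | (i+1), hi => exact h2 i (by omega)
  · intro y
    refine (hexa y).trans ?_
    constructor
    · rintro ⟨x, rfl⟩
      obtain ⟨z, rfl⟩ := h3 x
      exact ⟨z, rfl⟩
    · rintro ⟨z, rfl⟩
      exact ⟨aug z, rfl⟩
  · intro i
    match i with
    | 0 =>
      intro y
      show ι (aug y) = 0 ↔ _
      rw [show (0 : F) = ι 0 from (map_zero ι).symm]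
      rw [hι.eq_iff]
      exact h4 y
    | (i+1) => exact h5 i

/-- Lifting through a surjection, with a pointwise conclusion. -/
theorem lift_of_proj {A B C : Type u} [AddCommGroup A] [Module T A]
    [AddCommGroup B] [Module T B] [AddCommGroup C] [Module T C] (hA : Module.Projective T A)
    (f : B →ₗ[T] C) (g : A →ₗ[T] C) (hf : Function.Surjective f) :
    ∃ h : A →ₗ[T] B, ∀ z, f (h z) = g z := by
  haveI := hA
  obtain ⟨h, hh⟩ := Module.projective_lifting_property f g hf
  exact ⟨h, fun z => by rw [← hh]; rfl⟩

end General

/-! #### Restriction of scalars along `ε` and `σ` -/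

section Convert
variable (R E : Type u) [CommRing R] [AddCommGroup E] [Module R E]
    [Module Rᵐᵒᵖ E] [IsCentralScalar R E]

def toS (A : ModuleCat.{u} R) : ModuleCat.{u} (TrivSqZeroExt R E) :=
  @ModuleCat.of (TrivSqZeroExt R E) _ A _ (Module.compHom A (paperEps R E))

def toSmap {A B : ModuleCat.{u} R} (f : A →ₗ[R] B) :
    (toS R E A : Type u) →ₗ[TrivSqZeroExt R E] (toS R E B : Type u) where
  toFun := f
  map_add' := map_add f
  map_smul' s a := f.map_smul (paperEps R E s) a

def toR' (Q : ModuleCat.{u} (TrivSqZeroExt R E)) : ModuleCat.{u} R :=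
  @ModuleCat.of R _ Q _ (Module.compHom Q (TrivSqZeroExt.inlHom R E))

def toRmap {Q Q' : ModuleCat.{u} (TrivSqZeroExt R E)} (f : Q →ₗ[TrivSqZeroExt R E] Q') :
    (toR' R E Q : Type u) →ₗ[R] (toR' R E Q' : Type u) where
  toFun := f
  map_add' := map_add f
  map_smul' r q := f.map_smul (inl r) q

def mixmap {Q : ModuleCat.{u} (TrivSqZeroExt R E)} {A : ModuleCat.{u} R}
    (f : Q →ₗ[TrivSqZeroExt R E] (toS R E A : Type u)) : (toR' R E Q : Type u) →ₗ[R] A where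
  toFun := f
  map_add' := map_add f
  map_smul' r q := f.map_smul (inl r) q

theorem projective_descend {A : ModuleCat.{u} R}
    (h : Module.Projective (TrivSqZeroExt R E) (toS R E A)) : Module.Projective R A := by
  letI : Module (TrivSqZeroExt R E) (A : Type u) := Module.compHom A (paperEps R E)
  obtain ⟨s, hs⟩ := Module.projective_def.mp h
  have hz : ∀ i : (A : Type u), (0 : R) • i = 0 := fun i => zero_smul R i
  refine Module.projective_def.mpr
    ⟨⟨⟨fun a => Finsupp.mapRange (paperEps R E) (map_zero _) (s a), fun a b => ?_⟩, ?_⟩, ?_⟩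
  · show Finsupp.mapRange (paperEps R E) (map_zero _) (s (a + b))
        = Finsupp.mapRange (paperEps R E) (map_zero _) (s a)
          + Finsupp.mapRange (paperEps R E) (map_zero _) (s b)
    exact (congrArg (Finsupp.mapRange (paperEps R E) (map_zero _)) (map_add s a b)).trans
      (Finsupp.mapRange_add (map_add _) _ _)
  · intro r a
    have e1 : s ((inl r : TrivSqZeroExt R E) • a) = (inl r : TrivSqZeroExt R E) • s a :=
      map_smul s (inl r) a
    show Finsupp.mapRange (paperEps R E) (map_zero _) (s ((inl r : TrivSqZeroExt R E) • a))
        = r • Finsupp.mapRange (paperEps R E) (map_zero _) (s a)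
    rw [e1]
    ext x
    simp only [Finsupp.mapRange_apply, Finsupp.smul_apply, smul_eq_mul, map_mul]
    rw [show paperEps R E (inl r) = r from rfl]
  · intro a
    have h2 := hs a
    rw [Finsupp.linearCombination_apply] at h2
    show Finsupp.linearCombination R _root_.id
        ((Finsupp.mapRange (paperEps R E) (map_zero _) (s a) : (A : Type u) →₀ R)) = a
    rw [Finsupp.linearCombination_apply]
    exact (Finsupp.sum_mapRange_index (h := fun (i : (A : Type u)) (c : R) => c • _root_.id i)
      (fun i => hz i)).trans h2

end Convert

/-! #### The free syzygy tower over `R` -/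

section Tower
variable (R : Type u) [CommRing R] (M : Type u) [AddCommGroup M] [Module R M]

def KKstep (K : ModuleCat.{u} R) : ModuleCat.{u} R :=
  ModuleCat.of R (LinearMap.ker
    (Finsupp.linearCombination (α := (K : Type u)) (M := (K : Type u)) R _root_.id))

def KK : ℕ → ModuleCat.{u} R := fun n =>
  Nat.rec (motive := fun _ => ModuleCat.{u} R) (ModuleCat.of R M) (fun _ K => KKstep R K) n

def FF (i : ℕ) : ModuleCat.{u} R := ModuleCat.of R ((KK R M i : Type u) →₀ R)

def qq (i : ℕ) : (FF R M i : Type u) →ₗ[R] KK R M i := Finsupp.linearCombination R _root_.id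

def KerS (i : ℕ) : Submodule R (FF R M i) := LinearMap.ker (qq R M i)

def inc (i : ℕ) : (KK R M (i+1) : Type u) →ₗ[R] FF R M i := (KerS R M i).subtype

def dd (i : ℕ) : (FF R M (i+1) : Type u) →ₗ[R] FF R M i := (inc R M i).comp (qq R M (i+1))

lemma qq_surj (i : ℕ) : Function.Surjective (qq R M i) :=
  Finsupp.linearCombination_id_surjective R _

lemma inc_inj (i : ℕ) : Function.Injective (inc R M i) := Subtype.val_injective

lemma qq_inc (i : ℕ) (x : (KK R M (i+1) : Type u)) : qq R M i (inc R M i x) = 0 := x.2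

lemma FF_proj (i : ℕ) : Module.Projective R (FF R M i) :=
  inferInstanceAs (Module.Projective R ((KK R M i : Type u) →₀ R))

lemma dd_inc (i : ℕ) (x : (KK R M (i+2) : Type u)) : dd R M i (inc R M (i+1) x) = 0 := by
  show inc R M i (qq R M (i+1) (inc R M (i+1) x)) = 0
  rw [qq_inc, map_zero]

lemma dd_dd (i : ℕ) (x : (FF R M (i+2) : Type u)) : dd R M i (dd R M (i+1) x) = 0 := by
  show inc R M i (qq R M (i+1) (inc R M (i+1) (qq R M (i+2) x))) = 0
  rw [qq_inc, map_zero]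

lemma qq_dd (i : ℕ) (x : (FF R M (i+1) : Type u)) : qq R M i (dd R M i x) = 0 :=
  qq_inc R M i (qq R M (i+1) x)

lemma exact_inc_qq (i : ℕ) : Function.Exact (inc R M i) (qq R M i) := by
  intro y
  constructor
  · intro hy
    exact ⟨⟨y, hy⟩, rfl⟩
  · rintro ⟨⟨v, hv⟩, rfl⟩
    exact hv

lemma dd_eq (i : ℕ) (x : (FF R M (i+1) : Type u)) :
    dd R M i x = inc R M i (qq R M (i+1) x) := rfl

end Tower

end Stmt8Aux

namespace Stmt8Aux

/-! #### Comparison of resolutions -/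

section Compare
variable (R E : Type u) [CommRing R] [AddCommGroup E] [Module R E]
    [Module Rᵐᵒᵖ E] [IsCentralScalar R E]
variable (M : Type u) [AddCommGroup M] [Module R M]
variable (P : ℕ → ModuleCat.{u} (TrivSqZeroExt R E))
variable (dP : ∀ i, (P (i+1) : Type u) →ₗ[TrivSqZeroExt R E] (P i : Type u))
variable (augP : (P 0 : Type u) →ₗ[TrivSqZeroExt R E] (toS R E (KK R M 0) : Type u))
variable (hproj : ∀ i, Module.Projective (TrivSqZeroExt R E) (P i))
variable (hsurj : Function.Surjective augP)
variable (hex0 : Function.Exact (dP 0) augP)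
variable (hex : ∀ i, Function.Exact (dP (i+1)) (dP i))

/-- `S`-linear corestriction into the `i+1`-st syzygy. -/
def coresS {Q : ModuleCat.{u} (TrivSqZeroExt R E)} (i : ℕ)
    (f : (Q : Type u) →ₗ[TrivSqZeroExt R E] (toS R E (FF R M i) : Type u))
    (hf : ∀ z, qq R M i (f z) = 0) :
    (Q : Type u) →ₗ[TrivSqZeroExt R E] (toS R E (KK R M (i+1)) : Type u) where
  toFun z := ⟨f z, hf z⟩
  map_add' a b := Subtype.ext (map_add f a b)
  map_smul' s a := Subtype.ext (map_smul f s a)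

lemma toSmap_qq_surj (i : ℕ) : Function.Surjective (toSmap R E (qq R M i)) :=
  qq_surj R M i

/-- The type of the data at stage `i` of the `S`-linear comparison map `φ`. -/
def PhiSt (i : ℕ) : Type u :=
  Σ' f : (P i : Type u) →ₗ[TrivSqZeroExt R E] (toS R E (FF R M i) : Type u),
    ∀ z : (P (i+1) : Type u), qq R M i (f (dP i z)) = 0

def phiLift0 : ∃ h : (P 0 : Type u) →ₗ[TrivSqZeroExt R E] (toS R E (FF R M 0) : Type u),
    ∀ z, toSmap R E (qq R M 0) (h z) = augP z :=
  lift_of_proj (hproj 0) (toSmap R E (qq R M 0)) augP (toSmap_qq_surj R E M 0)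

def phi0 : PhiSt R E M P dP 0 :=
  ⟨Classical.choose (phiLift0 R E M P augP hproj),
   fun z => by
    have hs := Classical.choose_spec (phiLift0 R E M P augP hproj)
    have h1 : qq R M 0 (Classical.choose (phiLift0 R E M P augP hproj) (dP 0 z))
        = augP (dP 0 z) := hs (dP 0 z)
    rw [h1]
    exact (hex0 (dP 0 z)).mpr ⟨z, rfl⟩⟩

def phiLift (i : ℕ) (prev : PhiSt R E M P dP i) :
    ∃ h : (P (i+1) : Type u) →ₗ[TrivSqZeroExt R E] (toS R E (FF R M (i+1)) : Type u),
      ∀ z, toSmap R E (qq R M (i+1)) (h z)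
        = coresS R E M i (prev.1.comp (dP i)) prev.2 z :=
  lift_of_proj (hproj (i+1)) (toSmap R E (qq R M (i+1)))
    (coresS R E M i (prev.1.comp (dP i)) prev.2) (toSmap_qq_surj R E M (i+1))

def phiStep (i : ℕ) (prev : PhiSt R E M P dP i) : PhiSt R E M P dP (i+1) :=
  ⟨Classical.choose (phiLift R E M P dP hproj i prev),
   fun z => by
    have hs := Classical.choose_spec (phiLift R E M P dP hproj i prev)
    apply inc_inj R M i
    rw [map_zero]
    have h1 : inc R M i (qq R M (i+1)
          (Classical.choose (phiLift R E M P dP hproj i prev) (dP (i+1) z)))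
        = prev.1 (dP i (dP (i+1) z)) :=
      congrArg Subtype.val (hs (dP (i+1) z))
    rw [h1, (hex i (dP (i+1) z)).mpr ⟨z, rfl⟩, map_zero]
    rfl⟩

def phiAux : ∀ i, PhiSt R E M P dP i := fun i =>
  Nat.rec (motive := fun i => PhiSt R E M P dP i) (phi0 R E M P dP augP hproj hex0)
    (fun i prev => phiStep R E M P dP hproj hex i prev) i

lemma phi_base (p : (P 0 : Type u)) :
    qq R M 0 ((phiAux R E M P dP augP hproj hex0 hex 0).1 p) = augP p :=
  Classical.choose_spec (phiLift0 R E M P augP hproj) p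

lemma phi_chain (i : ℕ) (z : (P (i+1) : Type u)) :
    dd R M i ((phiAux R E M P dP augP hproj hex0 hex (i+1)).1 z)
      = (phiAux R E M P dP augP hproj hex0 hex i).1 (dP i z) := by
  have e : phiAux R E M P dP augP hproj hex0 hex (i+1)
      = phiStep R E M P dP hproj hex i (phiAux R E M P dP augP hproj hex0 hex i) := rfl
  rw [e]
  exact congrArg Subtype.val
    (Classical.choose_spec
      (phiLift R E M P dP hproj i (phiAux R E M P dP augP hproj hex0 hex i)) z)

/-- The type of the data at stage `i` of the `R`-linear comparison map `ψ`. -/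
def PsiSt (i : ℕ) : Type u :=
  Σ' f : (FF R M i : Type u) →ₗ[R] (toR' R E (P i) : Type u),
    ∀ x : (FF R M (i+1) : Type u), f (dd R M i x) ∈ LinearMap.range (toRmap R E (dP i))

def psiLift0 : ∃ h : (FF R M 0 : Type u) →ₗ[R] (toR' R E (P 0) : Type u),
    ∀ z, mixmap R E augP (h z) = qq R M 0 z :=
  lift_of_proj (FF_proj R M 0) (mixmap R E augP) (qq R M 0) hsurj

def psi0 : PsiSt R E M P dP 0 :=
  ⟨Classical.choose (psiLift0 R E M P augP hsurj),
   fun x => by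
    have hs := Classical.choose_spec (psiLift0 R E M P augP hsurj)
    have h1 : augP (Classical.choose (psiLift0 R E M P augP hsurj) (dd R M 0 x)) = 0 :=
      (hs (dd R M 0 x)).trans (qq_dd R M 0 x)
    obtain ⟨w, hw⟩ := (hex0 _).mp h1
    exact ⟨w, hw⟩⟩

def psiLift (i : ℕ) (prev : PsiSt R E M P dP i) :
    ∃ h : (FF R M (i+1) : Type u) →ₗ[R] (toR' R E (P (i+1)) : Type u),
      ∀ z, (toRmap R E (dP i)).rangeRestrict (h z)
        = LinearMap.codRestrict _ (prev.1.comp (dd R M i)) prev.2 z :=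
  lift_of_proj (FF_proj R M (i+1)) ((toRmap R E (dP i)).rangeRestrict)
    (LinearMap.codRestrict _ (prev.1.comp (dd R M i)) prev.2)
    (LinearMap.surjective_rangeRestrict _)

def psiStep (i : ℕ) (prev : PsiSt R E M P dP i) : PsiSt R E M P dP (i+1) :=
  ⟨Classical.choose (psiLift R E M P dP i prev),
   fun x => by
    have hs := Classical.choose_spec (psiLift R E M P dP i prev)
    have h1 : dP i (Classical.choose (psiLift R E M P dP i prev) (dd R M (i+1) x))
        = prev.1 (dd R M i (dd R M (i+1) x)) :=
      congrArg Subtype.val (hs (dd R M (i+1) x))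
    rw [dd_dd, map_zero] at h1
    obtain ⟨w, hw⟩ := (hex i _).mp h1
    exact ⟨w, hw⟩⟩

def psiAux : ∀ i, PsiSt R E M P dP i := fun i =>
  Nat.rec (motive := fun i => PsiSt R E M P dP i) (psi0 R E M P dP augP hsurj hex0)
    (fun i prev => psiStep R E M P dP hex i prev) i

lemma psi_base (p : (FF R M 0 : Type u)) :
    augP ((psiAux R E M P dP augP hsurj hex0 hex 0).1 p) = qq R M 0 p :=
  Classical.choose_spec (psiLift0 R E M P augP hsurj) p

lemma psi_chain (i : ℕ) (x : (FF R M (i+1) : Type u)) :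
    dP i ((psiAux R E M P dP augP hsurj hex0 hex (i+1)).1 x)
      = (psiAux R E M P dP augP hsurj hex0 hex i).1 (dd R M i x) := by
  have e : psiAux R E M P dP augP hsurj hex0 hex (i+1)
      = psiStep R E M P dP hex i (psiAux R E M P dP augP hsurj hex0 hex i) := rfl
  rw [e]
  exact congrArg Subtype.val
    (Classical.choose_spec
      (psiLift R E M P dP i (psiAux R E M P dP augP hsurj hex0 hex i)) x)

/-- The composite `φ ∘ ψ` in degree `i`, an `R`-linear endomorphism of `FF i`. -/
def cps (i : ℕ) : (FF R M i : Type u) →ₗ[R] (FF R M i : Type u) :=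
  (mixmap R E ((phiAux R E M P dP augP hproj hex0 hex i).1)).comp
    ((psiAux R E M P dP augP hsurj hex0 hex i).1)

lemma cps_chain (i : ℕ) (x : (FF R M (i+1) : Type u)) :
    dd R M i (cps R E M P dP augP hproj hsurj hex0 hex (i+1) x)
      = cps R E M P dP augP hproj hsurj hex0 hex i (dd R M i x) := by
  show dd R M i ((phiAux R E M P dP augP hproj hex0 hex (i+1)).1
      ((psiAux R E M P dP augP hsurj hex0 hex (i+1)).1 x))
    = (phiAux R E M P dP augP hproj hex0 hex i).1
      ((psiAux R E M P dP augP hsurj hex0 hex i).1 (dd R M i x))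
  exact (phi_chain R E M P dP augP hproj hex0 hex i _).trans
    (congrArg (phiAux R E M P dP augP hproj hex0 hex i).1 (psi_chain R E M P dP augP hsurj hex0 hex i x))

lemma qq_cps0 (x : (FF R M 0 : Type u)) :
    qq R M 0 (cps R E M P dP augP hproj hsurj hex0 hex 0 x) = qq R M 0 x := by
  show qq R M 0 ((phiAux R E M P dP augP hproj hex0 hex 0).1
      ((psiAux R E M P dP augP hsurj hex0 hex 0).1 x)) = qq R M 0 x
  exact (phi_base R E M P dP augP hproj hex0 hex _).trans (psi_base R E M P dP augP hsurj hex0 hex x)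

/-- Existence of one step of the chain homotopy. -/
lemma exists_piece (j : ℕ) (e : (FF R M j : Type u) →ₗ[R] (FF R M j : Type u))
    (he : ∀ x, qq R M j (e x) = 0) :
    ∃ h : (FF R M j : Type u) →ₗ[R] (FF R M (j+1) : Type u), ∀ x, dd R M j (h x) = e x := by
  obtain ⟨h, hh⟩ := lift_of_proj (FF_proj R M j) (qq R M (j+1))
    (LinearMap.codRestrict (KerS R M j) e he) (qq_surj R M (j+1))
  exact ⟨h, fun x => congrArg Subtype.val (hh x)⟩

/-- The degree-zero homotopy defect `id - φ₀ψ₀`. -/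
def ee0 : (FF R M 0 : Type u) →ₗ[R] (FF R M 0 : Type u) :=
  LinearMap.id - cps R E M P dP augP hproj hsurj hex0 hex 0

/-- The higher homotopy defect `id - φψ - h ∘ d`. -/
def eTop (i : ℕ) (w : (FF R M i : Type u) →ₗ[R] (FF R M (i+1) : Type u)) :
    (FF R M (i+1) : Type u) →ₗ[R] (FF R M (i+1) : Type u) :=
  LinearMap.id - cps R E M P dP augP hproj hsurj hex0 hex (i+1) - w.comp (dd R M i)

lemma ee0_apply (x : (FF R M 0 : Type u)) :
    ee0 R E M P dP augP hproj hsurj hex0 hex x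
      = x - cps R E M P dP augP hproj hsurj hex0 hex 0 x := rfl

lemma eTop_apply (i : ℕ) (w : (FF R M i : Type u) →ₗ[R] (FF R M (i+1) : Type u))
    (x : (FF R M (i+1) : Type u)) :
    eTop R E M P dP augP hproj hsurj hex0 hex i w x
      = x - cps R E M P dP augP hproj hsurj hex0 hex (i+1) x - w (dd R M i x) := rfl

lemma he0 : ∀ x, qq R M 0 (ee0 R E M P dP augP hproj hsurj hex0 hex x) = 0 := by
  intro x
  rw [ee0_apply, map_sub, qq_cps0, sub_self]

def hzero : ∃ h : (FF R M 0 : Type u) →ₗ[R] (FF R M 1 : Type u),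
    ∀ x, dd R M 0 (h x) = ee0 R E M P dP augP hproj hsurj hex0 hex x :=
  exists_piece R M 0 (ee0 R E M P dP augP hproj hsurj hex0 hex)
    (he0 R E M P dP augP hproj hsurj hex0 hex)

lemma heTop0 : ∀ x, qq R M 1 (eTop R E M P dP augP hproj hsurj hex0 hex 0
    (Classical.choose (hzero R E M P dP augP hproj hsurj hex0 hex)) x) = 0 := by
  intro x
  apply inc_inj R M 0
  rw [map_zero, ← dd_eq, eTop_apply]
  rw [map_sub, map_sub, cps_chain]
  rw [Classical.choose_spec (hzero R E M P dP augP hproj hsurj hex0 hex) (dd R M 0 x)]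
  rw [ee0_apply]
  abel

def hone : ∃ h : (FF R M 1 : Type u) →ₗ[R] (FF R M 2 : Type u),
    ∀ x, dd R M 1 (h x) = eTop R E M P dP augP hproj hsurj hex0 hex 0
      (Classical.choose (hzero R E M P dP augP hproj hsurj hex0 hex)) x :=
  exists_piece R M 1 _ (heTop0 R E M P dP augP hproj hsurj hex0 hex)

def hSt (i : ℕ) : Type u :=
  Σ' hp : ((FF R M i : Type u) →ₗ[R] (FF R M (i+1) : Type u))
      × ((FF R M (i+1) : Type u) →ₗ[R] (FF R M (i+2) : Type u)),
    ∀ x, dd R M (i+1) (hp.2 x)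
      = x - cps R E M P dP augP hproj hsurj hex0 hex (i+1) x - hp.1 (dd R M i x)

def hpair0 : hSt R E M P dP augP hproj hsurj hex0 hex 0 :=
  ⟨(Classical.choose (hzero R E M P dP augP hproj hsurj hex0 hex),
    Classical.choose (hone R E M P dP augP hproj hsurj hex0 hex)),
   fun x => by
    rw [Classical.choose_spec (hone R E M P dP augP hproj hsurj hex0 hex) x, eTop_apply]⟩

lemma hStepAux (i : ℕ) (prev : hSt R E M P dP augP hproj hsurj hex0 hex i) :
    ∀ x, qq R M (i+2)
      (eTop R E M P dP augP hproj hsurj hex0 hex (i+1) prev.1.2 x) = 0 := by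
  intro x
  apply inc_inj R M (i+1)
  rw [map_zero, ← dd_eq, eTop_apply]
  rw [map_sub, map_sub, cps_chain]
  rw [prev.2 (dd R M (i+1) x)]
  rw [dd_dd, map_zero]
  abel

def hStepLift (i : ℕ) (prev : hSt R E M P dP augP hproj hsurj hex0 hex i) :
    ∃ h : (FF R M (i+2) : Type u) →ₗ[R] (FF R M (i+3) : Type u),
      ∀ x, dd R M (i+2) (h x)
        = eTop R E M P dP augP hproj hsurj hex0 hex (i+1) prev.1.2 x :=
  exists_piece R M (i+2) _ (hStepAux R E M P dP augP hproj hsurj hex0 hex i prev)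

def hStep (i : ℕ) (prev : hSt R E M P dP augP hproj hsurj hex0 hex i) :
    hSt R E M P dP augP hproj hsurj hex0 hex (i+1) :=
  ⟨(prev.1.2, Classical.choose (hStepLift R E M P dP augP hproj hsurj hex0 hex i prev)),
   fun x => by
    rw [Classical.choose_spec (hStepLift R E M P dP augP hproj hsurj hex0 hex i prev) x,
      eTop_apply]⟩

def hAux : ∀ i, hSt R E M P dP augP hproj hsurj hex0 hex i := fun i =>
  Nat.rec (motive := fun i => hSt R E M P dP augP hproj hsurj hex0 hex i)
    (hpair0 R E M P dP augP hproj hsurj hex0 hex)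
    (fun i prev => hStep R E M P dP augP hproj hsurj hex0 hex i prev) i

def hh : ∀ i, (FF R M i : Type u) →ₗ[R] (FF R M (i+1) : Type u) := fun i =>
  match i with
  | 0 => (hAux R E M P dP augP hproj hsurj hex0 hex 0).1.1
  | (j+1) => (hAux R E M P dP augP hproj hsurj hex0 hex j).1.2

lemma hh_base (x : (FF R M 0 : Type u)) :
    dd R M 0 (hh R E M P dP augP hproj hsurj hex0 hex 0 x)
      = x - cps R E M P dP augP hproj hsurj hex0 hex 0 x := by
  rw [show hh R E M P dP augP hproj hsurj hex0 hex 0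
      = Classical.choose (hzero R E M P dP augP hproj hsurj hex0 hex) from rfl]
  rw [Classical.choose_spec (hzero R E M P dP augP hproj hsurj hex0 hex) x, ee0_apply]

lemma hh_rel (i : ℕ) (x : (FF R M (i+1) : Type u)) :
    dd R M (i+1) (hh R E M P dP augP hproj hsurj hex0 hex (i+1) x)
      = x - cps R E M P dP augP hproj hsurj hex0 hex (i+1) x
        - hh R E M P dP augP hproj hsurj hex0 hex i (dd R M i x) := by
  cases i with
  | zero => exact (hAux R E M P dP augP hproj hsurj hex0 hex 0).2 x
  | succ j => exact (hAux R E M P dP augP hproj hsurj hex0 hex (j+1)).2 x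

include dP augP hproj hsurj hex0 hex in
theorem KK_proj_top (m : ℕ) (htriv : Subsingleton (P (m+2))) :
    Module.Projective R (KK R M (m+1)) := by
  -- injectivity of the top differential
  have hinj : Function.Injective (toRmap R E (dP m)) := by
    intro a b hab
    have hab' : dP m a = dP m b := hab
    have h0 : dP m (a - b) = 0 := (map_sub (dP m) a b).trans (sub_eq_zero.mpr hab')
    obtain ⟨w, hw⟩ := (hex m _).mp h0
    have hw0 : w = 0 := Subsingleton.elim w 0
    rw [hw0, map_zero] at hw
    exact sub_eq_zero.mp hw.symm
  -- ψ_m ∘ inc lands in the range of dP m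
  have mem : ∀ x : (KK R M (m+1) : Type u),
      (psiAux R E M P dP augP hsurj hex0 hex m).1 (inc R M m x)
        ∈ LinearMap.range (toRmap R E (dP m)) := by
    intro x
    match m with
    | 0 =>
      have h2 : augP ((psiAux R E M P dP augP hsurj hex0 hex 0).1 (inc R M 0 x)) = 0 :=
        (psi_base R E M P dP augP hsurj hex0 hex (inc R M 0 x)).trans (qq_inc R M 0 x)
      obtain ⟨w, hw⟩ := (hex0 _).mp h2
      exact ⟨w, hw⟩
    | (j+1) =>
      have h2 : dP j ((psiAux R E M P dP augP hsurj hex0 hex (j+1)).1 (inc R M (j+1) x))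
          = 0 := by
        rw [psi_chain R E M P dP augP hsurj hex0 hex j (inc R M (j+1) x)]
        rw [dd_inc, map_zero]
        rfl
      obtain ⟨w, hw⟩ := (hex j _).mp h2
      exact ⟨w, hw⟩
  -- the lift of ψ_m ∘ inc through the top differential
  set eqv := LinearEquiv.ofInjective (toRmap R E (dP m)) hinj with heqv
  set psit : (KK R M (m+1) : Type u) →ₗ[R] (toR' R E (P (m+1)) : Type u) :=
    eqv.symm.toLinearMap.comp (LinearMap.codRestrict _
      (((psiAux R E M P dP augP hsurj hex0 hex m).1).comp (inc R M m)) mem) with hpsit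
  have psit_spec : ∀ x, dP m (psit x)
      = (psiAux R E M P dP augP hsurj hex0 hex m).1 (inc R M m x) := by
    intro x
    have h4 : toRmap R E (dP m) (eqv.symm (LinearMap.codRestrict _
        (((psiAux R E M P dP augP hsurj hex0 hex m).1).comp (inc R M m)) mem x))
        = ((LinearMap.codRestrict _
        (((psiAux R E M P dP augP hsurj hex0 hex m).1).comp (inc R M m)) mem x : _) : _) :=
      LinearEquiv.ofInjective_symm_apply (f := toRmap R E (dP m)) (h := hinj) _
    exact h4
  -- the section of qq (m+1)
  set t : (KK R M (m+1) : Type u) →ₗ[R] (FF R M (m+1) : Type u) :=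
    (mixmap R E ((phiAux R E M P dP augP hproj hex0 hex (m+1)).1)).comp psit
      + (hh R E M P dP augP hproj hsurj hex0 hex m).comp (inc R M m) with ht
  have hsec : ∀ x, qq R M (m+1) (t x) = x := by
    intro x
    apply inc_inj R M m
    rw [← dd_eq]
    have ht2 : t x = (mixmap R E ((phiAux R E M P dP augP hproj hex0 hex (m+1)).1)) (psit x)
        + hh R E M P dP augP hproj hsurj hex0 hex m (inc R M m x) := rfl
    rw [ht2, map_add]
    rw [show dd R M m ((mixmap R E ((phiAux R E M P dP augP hproj hex0 hex (m+1)).1)) (psit x))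
        = (phiAux R E M P dP augP hproj hex0 hex m).1 (dP m (psit x)) from
      phi_chain R E M P dP augP hproj hex0 hex m (psit x)]
    rw [psit_spec x]
    match m, x with
    | 0, x =>
      rw [hh_base]
      show cps R E M P dP augP hproj hsurj hex0 hex 0 (inc R M 0 x)
          + (inc R M 0 x - cps R E M P dP augP hproj hsurj hex0 hex 0 (inc R M 0 x))
          = inc R M 0 x
      abel
    | (j+1), x =>
      rw [hh_rel]
      rw [dd_inc, map_zero]
      show cps R E M P dP augP hproj hsurj hex0 hex (j+1) (inc R M (j+1) x)
          + (inc R M (j+1) x - cps R E M P dP augP hproj hsurj hex0 hex (j+1) (inc R M (j+1) x)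
            - 0) = inc R M (j+1) x
      abel
  haveI := FF_proj R M (m+1)
  exact Module.Projective.of_split t (qq R M (m+1)) (LinearMap.ext hsec)

end Compare

end Stmt8Aux

namespace Stmt8Aux

theorem key {R E : Type u} [CommRing R] [AddCommGroup E] [Module R E]
    [Module Rᵐᵒᵖ E] [IsCentralScalar R E]
    (M : Type u) [AddCommGroup M] [Module R M] (n : ℕ)
    (h : @HasLeftResLE (TrivSqZeroExt R E) _
        (fun N => Module.Projective (TrivSqZeroExt R E) N) M _
        (Module.compHom M (paperEps R E)) n) :
    HasLeftResLE R (fun N => Module.Projective R N) M n := by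
  obtain ⟨P, dP, augP, h1, h2, h3, h4, h5⟩ := h
  match n with
  | 0 =>
    haveI hs1 : Subsingleton (P 1 : Type u) := h2 1 Nat.one_pos
    have hinj : Function.Injective augP := by
      intro a b hab
      have h0 : augP (a - b) = 0 := by rw [map_sub, hab, sub_self]
      obtain ⟨w, hw⟩ := (h4 _).mp h0
      have hw0 : w = 0 := Subsingleton.elim w 0
      rw [hw0, map_zero] at hw
      exact sub_eq_zero.mp hw.symm
    haveI : Module.Projective (TrivSqZeroExt R E) (P 0 : Type u) := h1 0
    have hp : Module.Projective (TrivSqZeroExt R E) (toS R E (ModuleCat.of R M)) :=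
      Module.Projective.of_equiv (LinearEquiv.ofBijective
        (show (P 0 : Type u) →ₗ[TrivSqZeroExt R E] (toS R E (ModuleCat.of R M) : Type u)
          from augP.hom) ⟨hinj, h3⟩)
    exact hasLeftResLE_of_projective M (projective_descend R E hp) 0
  | (m+1) =>
    have hKp : Module.Projective R (KK R M (m+1)) :=
      KK_proj_top R E M P (fun i => (dP i).hom) augP.hom h1 h3 h4 h5 m (h2 (m+2) (by omega))
    have main : ∀ j, HasLeftResLE R (fun N => Module.Projective R N)
        (KK R M (m+1-j) : Type u) j := by
      intro j
      induction j with
      | zero => exact hasLeftResLE_of_projective _ hKp 0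
      | succ j ih =>
        by_cases hj : j ≤ m
        · have e1 : m+1-j = (m-j)+1 := by omega
          rw [e1] at ih
          have e2 : m+1-(j+1) = m-j := by omega
          rw [e2]
          exact HasLeftResLE.prepend (FF_proj R M (m-j)) (qq R M (m-j)) (inc R M (m-j))
            (qq_surj R M (m-j)) (inc_inj R M (m-j)) (exact_inc_qq R M (m-j)) ih
        · have e3 : m+1-(j+1) = m+1-j := by omega
          rw [e3]
          exact HasLeftResLE.mono ih (Nat.le_succ j)
    have hfin := main (m+1)
    rw [Nat.sub_self] at hfin
    exact hfin

end Stmt8Aux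

theorem stmt8 (R E : Type u) [CommRing R] [AddCommGroup E] [Module R E]
    [Module Rᵐᵒᵖ E] [IsCentralScalar R E]
    (M : Type u) [AddCommGroup M] [Module R M] :
    projDim R M ≤ @projDim (TrivSqZeroExt R E) _ M _ (Module.compHom M (paperEps R E)) := by
  apply sInf_le_sInf
  rintro x ⟨n, hn, rfl⟩
  exact ⟨n, Stmt8Aux.key M n hn, rfl⟩
end
end

section
/- Let R be a commutative ring and E an R-module such that R has finite projective dimension as an R⋉E-module. If M is a Gorenstein projective R⋉E-module, then M ⊗_{R⋉E} R is a Gorenstein projective R-module. -/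
open CategoryTheory TrivSqZeroExt

noncomputable section

universe u

/-- `M` is Gorenstein projective over `R`: it is a syzygy of a complete projective
resolution, i.e. an exact complex of projectives which stays exact under
`Hom(-, Q)` for every projective `Q`. -/
def IsGorensteinProjective (R : Type u) [CommRing R]
    (M : Type u) [AddCommGroup M] [Module R M] : Prop :=
  ∃ (P : ℤ → ModuleCat.{u} R) (d : ∀ i : ℤ, P (i + 1) ⟶ P i),
    (∀ i, Module.Projective R (P i)) ∧
    (∀ i, Function.Exact (d (i + 1)) (d i)) ∧
    (∀ Q : ModuleCat.{u} R, Module.Projective R Q →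
      ∀ i : ℤ, Function.Exact (LinearMap.lcomp R Q (d i).hom) (LinearMap.lcomp R Q (d (i + 1)).hom)) ∧
    Nonempty (M ≃ₗ[R] LinearMap.range (d 0).hom)

/-- Gorenstein projective dimension of `M` over `R`, as an element of `ℕ∞`. -/
def gprojDim (R : Type u) [CommRing R] (M : Type u) [AddCommGroup M] [Module R M] : ℕ∞ :=
  sInf ((fun n : ℕ => (n : ℕ∞)) '' {n : ℕ | HasLeftResLE R (fun N => IsGorensteinProjective R N) M n})

/-- Gorenstein global dimension of `R`: the supremum of the Gorenstein projective
dimensions of all `R`-modules. -/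
def Ggldim (R : Type u) [CommRing R] : ℕ∞ :=
  ⨆ M : ModuleCat.{u} R, gprojDim R M


section Lemmas
open Function

section Chase
variable {A : Type u} [CommRing A]

/-- Exactness passes to retracts of complexes (function version). -/
lemma exact_retract_fun {X1 X2 X3 Y1 Y2 Y3 : Type u} [Zero X3] [Zero Y3]
    (f : X1 → X2) (g : X2 → X3) (f' : Y1 → Y2) (g' : Y2 → Y3)
    (s1 : X1 → Y1) (s2 : X2 → Y2) (s3 : X3 → Y3)
    (r1 : Y1 → X1) (r2 : Y2 → X2)
    (hr2 : ∀ x, r2 (s2 x) = x) (hs3 : Function.Injective s3) (hs30 : s3 0 = 0)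
    (hsf : ∀ x, f' (s1 x) = s2 (f x)) (hsg : ∀ x, g' (s2 x) = s3 (g x))
    (hrf : ∀ y, r2 (f' y) = f (r1 y))
    (hex : Function.Exact f' g') : Function.Exact f g := by
  intro x2
  constructor
  · intro hx
    have : g' (s2 x2) = 0 := by rw [hsg, hx, hs30]
    obtain ⟨y1, hy1⟩ := (hex (s2 x2)).mp this
    exact ⟨r1 y1, by rw [← hrf, hy1, hr2]⟩
  · rintro ⟨x1, rfl⟩
    apply hs3
    rw [hs30, ← hsg, ← hsf]
    exact hex.apply_apply_eq_zero (s1 x1)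

/-- Exactness passes to retracts of complexes. -/
lemma exact_retract {X1 X2 X3 Y1 Y2 Y3 : Type u}
    [AddCommGroup X1] [AddCommGroup X2] [AddCommGroup X3]
    [AddCommGroup Y1] [AddCommGroup Y2] [AddCommGroup Y3]
    [Module A X1] [Module A X2] [Module A X3]
    [Module A Y1] [Module A Y2] [Module A Y3]
    (f : X1 →ₗ[A] X2) (g : X2 →ₗ[A] X3) (f' : Y1 →ₗ[A] Y2) (g' : Y2 →ₗ[A] Y3)
    (s1 : X1 →ₗ[A] Y1) (s2 : X2 →ₗ[A] Y2) (s3 : X3 →ₗ[A] Y3)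
    (r1 : Y1 →ₗ[A] X1) (r2 : Y2 →ₗ[A] X2)
    (hr2 : ∀ x, r2 (s2 x) = x) (hs3 : Function.Injective s3)
    (hsf : ∀ x, f' (s1 x) = s2 (f x)) (hsg : ∀ x, g' (s2 x) = s3 (g x))
    (hrf : ∀ y, r2 (f' y) = f (r1 y))
    (hex : Function.Exact f' g') : Function.Exact f g := by
  intro x2
  constructor
  · intro hx
    have : g' (s2 x2) = 0 := by rw [hsg, hx, map_zero]
    obtain ⟨y1, hy1⟩ := (hex (s2 x2)).mp this
    exact ⟨r1 y1, by rw [← hrf, hy1, hr2]⟩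
  · rintro ⟨x1, rfl⟩
    apply hs3
    rw [map_zero, ← hsg, ← hsf]
    exact hex.apply_apply_eq_zero (s1 x1)

/-- Exactness of the quotient complex in a short exact sequence of complexes,
given exactness of the sub and total complexes: a diagram chase around levels
`m ← 0 ← 1 ← 2`.  -/
lemma exact_of_ses_chase {Xm X0 X1 Ym Y0 Y1 Y2 Z0 Z1 Z2 : Type u}
    [AddCommGroup Xm] [AddCommGroup X0] [AddCommGroup X1]
    [AddCommGroup Ym] [AddCommGroup Y0] [AddCommGroup Y1] [AddCommGroup Y2]
    [AddCommGroup Z0] [AddCommGroup Z1] [AddCommGroup Z2]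
    [Module A Xm] [Module A X0] [Module A X1]
    [Module A Ym] [Module A Y0] [Module A Y1] [Module A Y2]
    [Module A Z0] [Module A Z1] [Module A Z2]
    (dX0 : X1 →ₗ[A] X0) (dXm : X0 →ₗ[A] Xm)
    (dY1 : Y2 →ₗ[A] Y1) (dY0 : Y1 →ₗ[A] Y0) (dYm : Y0 →ₗ[A] Ym)
    (dZ1 : Z2 →ₗ[A] Z1) (dZ0 : Z1 →ₗ[A] Z0)
    (jm : Xm →ₗ[A] Ym) (j0 : X0 →ₗ[A] Y0) (j1 : X1 →ₗ[A] Y1)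
    (p0 : Y0 →ₗ[A] Z0) (p1 : Y1 →ₗ[A] Z1) (p2 : Y2 →ₗ[A] Z2)
    (hXex : Function.Exact dX0 dXm)
    (hYex : Function.Exact dY1 dY0)
    (hYc : ∀ y, dYm (dY0 y) = 0) (hYc' : ∀ y, dY0 (dY1 y) = 0)
    (hjm : Function.Injective jm)
    (hvex : Function.Exact j0 p0) (hvc1 : ∀ x, p1 (j1 x) = 0)
    (hp1 : Function.Surjective p1) (hp2 : Function.Surjective p2)
    (hsq_jm : ∀ x, dYm (j0 x) = jm (dXm x))
    (hsq_j0 : ∀ x, dY0 (j1 x) = j0 (dX0 x))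
    (hsq_p0 : ∀ y, dZ0 (p1 y) = p0 (dY0 y))
    (hsq_p1 : ∀ y, dZ1 (p2 y) = p1 (dY1 y)) :
    Function.Exact dZ1 dZ0 := by
  intro z
  constructor
  · intro hz
    obtain ⟨y, rfl⟩ := hp1 z
    have h1 : p0 (dY0 y) = 0 := by rw [← hsq_p0, hz]
    obtain ⟨x, hx⟩ := (hvex (dY0 y)).mp h1
    have h2 : jm (dXm x) = 0 := by rw [← hsq_jm, hx, hYc]
    have h3 : dXm x = 0 := hjm (by rw [h2, map_zero])
    obtain ⟨x', hx'⟩ := (hXex x).mp h3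
    have h4 : dY0 (y - j1 x') = 0 := by
      rw [map_sub, hsq_j0, hx', hx, sub_self]
    obtain ⟨y', hy'⟩ := (hYex _).mp h4
    refine ⟨p2 y', ?_⟩
    rw [hsq_p1, hy', map_sub]
    rw [hvc1, sub_zero]
  · rintro ⟨z', rfl⟩
    obtain ⟨y, rfl⟩ := hp2 z'
    rw [hsq_p1, hsq_p0, hYc', map_zero]

end Chase

section Good
open CategoryTheory LinearMap
variable {A : Type u} [CommRing A]
variable (P : ℤ → ModuleCat.{u} A) (d : ∀ i : ℤ, P (i + 1) ⟶ P i)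

/-- `N` is "good" for the complex `(P, d)`: both `N ⊗ P` and `Hom(P, N)` are exact. -/
def IsGood (N : Type u) [AddCommGroup N] [Module A N] : Prop :=
  (∀ i : ℤ, Function.Exact (LinearMap.lTensor N (d (i + 1)).hom) (LinearMap.lTensor N (d i).hom)) ∧
  (∀ i : ℤ, Function.Exact (LinearMap.lcomp A N (d i).hom) (LinearMap.lcomp A N (d (i + 1)).hom))

variable (hproj : ∀ i, Module.Projective A (P i))
  (hexact : ∀ i, Function.Exact (d (i + 1)) (d i))
  (hhom : ∀ Q : ModuleCat.{u} A, Module.Projective A Q →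
      ∀ i : ℤ, Function.Exact (LinearMap.lcomp A Q (d i).hom) (LinearMap.lcomp A Q (d (i + 1)).hom))

include hexact hhom in
lemma isGood_of_projective (N : Type u) [AddCommGroup N] [Module A N]
    (hN : Module.Projective A N) : IsGood P d N := by
  constructor
  · intro i
    have := hN
    have : Module.Flat A N := Module.Flat.of_projective (R := A) (M := N)
    exact Module.Flat.lTensor_exact N (hexact i)
  · intro i
    exact hhom (ModuleCat.of A N) hN i

lemma isGood_retract {N N' : Type u} [AddCommGroup N] [Module A N]
    [AddCommGroup N'] [Module A N']
    (s : N' →ₗ[A] N) (r : N →ₗ[A] N') (hrs : ∀ x, r (s x) = x)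
    (hN : IsGood P d N) : IsGood P d N' := by
  constructor
  · intro i
    refine exact_retract (A := A) _ _ (LinearMap.lTensor N (d (i+1)).hom) (LinearMap.lTensor N (d i).hom)
      (LinearMap.rTensor _ s) (LinearMap.rTensor _ s) (LinearMap.rTensor _ s)
      (LinearMap.rTensor _ r) (LinearMap.rTensor _ r) ?_ ?_ ?_ ?_ ?_ (hN.1 i)
    · intro x
      rw [← LinearMap.comp_apply, ← LinearMap.rTensor_comp]
      have : r ∘ₗ s = LinearMap.id := by ext y; exact hrs y
      rw [this, LinearMap.rTensor_id]; rfl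
    · -- injectivity of rTensor s : need retraction
      have : Function.LeftInverse (LinearMap.rTensor (P i) r) (LinearMap.rTensor (P i) s) := by
        intro x
        rw [← LinearMap.comp_apply, ← LinearMap.rTensor_comp]
        have : r ∘ₗ s = LinearMap.id := by ext y; exact hrs y
        rw [this, LinearMap.rTensor_id]; rfl
      exact this.injective
    · intro x
      rw [← LinearMap.comp_apply, ← LinearMap.comp_apply,
        LinearMap.rTensor_comp_lTensor, LinearMap.lTensor_comp_rTensor]
    · intro x
      rw [← LinearMap.comp_apply, ← LinearMap.comp_apply,
        LinearMap.rTensor_comp_lTensor, LinearMap.lTensor_comp_rTensor]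
    · intro y
      rw [← LinearMap.comp_apply, ← LinearMap.comp_apply,
        LinearMap.rTensor_comp_lTensor, LinearMap.lTensor_comp_rTensor]
  · intro i
    refine exact_retract (A := A) _ _ (LinearMap.lcomp A N (d i).hom) (LinearMap.lcomp A N (d (i+1)).hom)
      (LinearMap.llcomp A _ _ _ s) (LinearMap.llcomp A _ _ _ s) (LinearMap.llcomp A _ _ _ s)
      (LinearMap.llcomp A _ _ _ r) (LinearMap.llcomp A _ _ _ r) ?_ ?_ ?_ ?_ ?_ (hN.2 i)
    · intro f; ext x; exact hrs (f x)
    · have : Function.LeftInverse (LinearMap.llcomp A (P (i+1+1)) N N' r)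
          (LinearMap.llcomp A (P (i+1+1)) N' N s) :=
        fun (f : (P (i+1+1) : Type u) →ₗ[A] N') => by ext x; exact hrs (f x)
      exact this.injective
    · intro f; rfl
    · intro f; rfl
    · intro f; rfl

include hproj hexact in
lemma isGood_of_ses {K F N : Type u} [AddCommGroup K] [Module A K]
    [AddCommGroup F] [Module A F] [AddCommGroup N] [Module A N]
    (ι : K →ₗ[A] F) (p : F →ₗ[A] N)
    (hι : Function.Injective ι) (hp : Function.Surjective p)
    (hex : Function.Exact ι p)
    (hK : IsGood P d K) (hF : IsGood P d F) : IsGood P d N := by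
  have flat : ∀ j : ℤ, Module.Flat A (P j) := fun j => by
    have := hproj j; exact Module.Flat.of_projective (R := A) (M := P j)
  constructor
  · intro i
    obtain ⟨m, rfl⟩ : ∃ m : ℤ, i = m + 1 := ⟨i - 1, by ring⟩
    refine exact_of_ses_chase (A := A)
      (LinearMap.lTensor K (d (m+1)).hom) (LinearMap.lTensor K (d m).hom)
      (LinearMap.lTensor F (d (m+1+1)).hom) (LinearMap.lTensor F (d (m+1)).hom) (LinearMap.lTensor F (d m).hom)
      (LinearMap.lTensor N (d (m+1+1)).hom) (LinearMap.lTensor N (d (m+1)).hom)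
      (LinearMap.rTensor _ ι) (LinearMap.rTensor _ ι) (LinearMap.rTensor _ ι)
      (LinearMap.rTensor _ p) (LinearMap.rTensor _ p) (LinearMap.rTensor _ p)
      (hK.1 m) (hF.1 (m+1)) ?_ ?_ ?_ ?_ ?_ ?_ ?_ ?_ ?_ ?_ ?_
    · intro y
      exact (hF.1 m).apply_apply_eq_zero y
    · intro y
      exact (hF.1 (m+1)).apply_apply_eq_zero y
    · exact Module.Flat.rTensor_preserves_injective_linearMap (M := P m) ι hι
    · exact rTensor_exact (P (m+1)) hex hp
    · intro x
      rw [← LinearMap.comp_apply, ← LinearMap.rTensor_comp]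
      have h0 : p ∘ₗ ι = 0 := by ext y; exact hex.apply_apply_eq_zero y
      rw [h0, LinearMap.rTensor_zero]; rfl
    · exact LinearMap.rTensor_surjective _ hp
    · exact LinearMap.rTensor_surjective _ hp
    · intro x
      rw [← LinearMap.comp_apply, ← LinearMap.comp_apply,
        LinearMap.lTensor_comp_rTensor, LinearMap.rTensor_comp_lTensor]
    · intro x
      rw [← LinearMap.comp_apply, ← LinearMap.comp_apply,
        LinearMap.lTensor_comp_rTensor, LinearMap.rTensor_comp_lTensor]
    · intro y
      rw [← LinearMap.comp_apply, ← LinearMap.comp_apply,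
        LinearMap.lTensor_comp_rTensor, LinearMap.rTensor_comp_lTensor]
    · intro y
      rw [← LinearMap.comp_apply, ← LinearMap.comp_apply,
        LinearMap.lTensor_comp_rTensor, LinearMap.rTensor_comp_lTensor]
  · intro i
    refine exact_of_ses_chase (A := A)
      (LinearMap.lcomp A K (d (i+1)).hom) (LinearMap.lcomp A K (d (i+1+1)).hom)
      (LinearMap.lcomp A F (d i).hom) (LinearMap.lcomp A F (d (i+1)).hom) (LinearMap.lcomp A F (d (i+1+1)).hom)
      (LinearMap.lcomp A N (d i).hom) (LinearMap.lcomp A N (d (i+1)).hom)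
      (LinearMap.llcomp A _ _ _ ι) (LinearMap.llcomp A _ _ _ ι) (LinearMap.llcomp A _ _ _ ι)
      (LinearMap.llcomp A _ _ _ p) (LinearMap.llcomp A _ _ _ p) (LinearMap.llcomp A _ _ _ p)
      (hK.2 (i+1)) (hF.2 i) ?_ ?_ ?_ ?_ ?_ ?_ ?_ ?_ ?_ ?_ ?_
    · intro f
      exact (hF.2 (i+1)).apply_apply_eq_zero f
    · intro f
      exact (hF.2 i).apply_apply_eq_zero f
    · intro f g h
      ext x
      exact hι (LinearMap.congr_fun h x)
    · -- vertical exactness: Exact (ι ∘ -) (p ∘ -) on Hom(P (i+1), -)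
      intro f
      constructor
      · intro hf
        have hmem : ∀ x, f x ∈ LinearMap.range ι := fun x =>
          (hex (f x)).mp (LinearMap.congr_fun hf x)
        refine ⟨(LinearEquiv.ofInjective ι hι).symm.toLinearMap ∘ₗ
          LinearMap.codRestrict (LinearMap.range ι) f hmem, ?_⟩
        ext x
        simp only [LinearMap.llcomp_apply, LinearMap.comp_apply, LinearEquiv.coe_coe,
          LinearEquiv.ofInjective_symm_apply, LinearMap.codRestrict_apply]
      · rintro ⟨g, rfl⟩
        ext x
        simp only [LinearMap.llcomp_apply, LinearMap.comp_apply]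
        exact hex.apply_apply_eq_zero (g x)
    · intro f
      ext x
      exact hex.apply_apply_eq_zero (f x)
    · -- surjectivity of p∘- : projectivity of P (i+1)
      intro g
      have := hproj (i+1)
      obtain ⟨h, hh⟩ := Module.projective_lifting_property p g hp
      exact ⟨h, hh⟩
    · intro g
      have := hproj (i+1+1)
      obtain ⟨h, hh⟩ := Module.projective_lifting_property p g hp
      exact ⟨h, hh⟩
    · intro f; rfl
    · intro f; rfl
    · intro f; rfl
    · intro f; rfl

include hproj hexact hhom in
/-- Modules of finite projective dimension are good. -/
lemma isGood_of_res : ∀ (n : ℕ) (N : Type u) (_ : AddCommGroup N) (_ : Module A N),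
    HasLeftResLE A (fun G => Module.Projective A G) N n → IsGood P d N := by
  intro n
  induction n with
  | zero =>
    intro N _ _ ⟨G, dd, aug, hP, hzero, hsurj, hex0, _⟩
    have hsub : Subsingleton (G 1) := hzero 1 (by norm_num)
    have hinj : Function.Injective aug := by
      rw [← LinearMap.ker_eq_bot]
      apply le_bot_iff.mp
      intro x hx
      obtain ⟨y, hy⟩ := (hex0 x).mp hx
      have : y = 0 := Subsingleton.elim _ _
      rw [this, map_zero] at hy
      simpa [← hy] using Submodule.zero_mem ⊥
    have e : (G 0 : Type u) ≃ₗ[A] N := LinearEquiv.ofBijective aug.hom ⟨hinj, hsurj⟩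
    exact isGood_retract P d e.symm.toLinearMap e.toLinearMap (fun x => e.apply_symm_apply x)
      (isGood_of_projective P d hexact hhom (G 0) (hP 0))
  | succ n IH =>
    intro N _ _ ⟨G, dd, aug, hP, hzero, hsurj, hex0, hex⟩
    set K := LinearMap.ker aug.hom with hK
    have hrange : LinearMap.range (dd 0).hom ≤ K := by
      rintro x ⟨y, rfl⟩
      exact LinearMap.mem_ker.mpr (hex0.apply_apply_eq_zero y)
    have hgoodK : IsGood P d K := by
      refine IH K _ _ ⟨fun i => G (i + 1), fun i => dd (i + 1),
        ModuleCat.ofHom (LinearMap.codRestrict K (dd 0).hom (fun x => hrange ⟨x, rfl⟩)), fun i => hP (i+1),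
        fun i hi => hzero (i+1) (by omega), ?_, ?_, fun i => hex (i+1)⟩
      · rintro ⟨x, hx⟩
        obtain ⟨y, hy⟩ := (hex0 x).mp hx
        exact ⟨y, Subtype.ext hy⟩
      · intro x
        constructor
        · intro hx
          have : (dd 0) x = 0 := congrArg Subtype.val hx
          exact (hex 0 x).mp this
        · rintro ⟨y, rfl⟩
          exact Subtype.ext ((hex 0).apply_apply_eq_zero y)
    exact isGood_of_ses P d hproj hexact (Submodule.subtype K) aug.hom
      (Submodule.injective_subtype K) hsurj
      (by intro x
          constructor
          · intro h
            exact ⟨⟨x, LinearMap.mem_ker.mpr h⟩, rfl⟩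
          · rintro ⟨⟨y, hy⟩, rfl⟩
            exact hy)
      hgoodK (isGood_of_projective P d hexact hhom (G 0) (hP 0))

end Good
end Lemmas

section Finsupp
open Function
variable {A : Type u} [CommRing A]

lemma projective_finsupp (ι : Type u) (M : Type u) [AddCommGroup M] [Module A M]
    (hM : Module.Projective A M) : Module.Projective A (ι →₀ M) := by
  obtain ⟨s, hs⟩ := Module.projective_def'.mp hM
  refine Module.Projective.of_split (M := ι →₀ (M →₀ A))
    (Finsupp.mapRange.linearMap s)
    (Finsupp.mapRange.linearMap (Finsupp.linearCombination A id)) ?_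
  rw [← Finsupp.mapRange.linearMap_comp, hs, Finsupp.mapRange.linearMap_id]

lemma exact_mapRange {ι : Type u} {M N P : Type u}
    [AddCommGroup M] [Module A M] [AddCommGroup N] [Module A N]
    [AddCommGroup P] [Module A P]
    (f : M →ₗ[A] N) (g : N →ₗ[A] P) (h : Function.Exact f g) :
    Function.Exact (Finsupp.mapRange.linearMap (α := ι) f)
      (Finsupp.mapRange.linearMap (α := ι) g) := by
  classical
  intro y
  constructor
  · intro hy
    have hya : ∀ a : ι, g (y a) = 0 := by
      intro a
      have := congrArg (fun z : ι →₀ P => z a) hy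
      simpa [Finsupp.mapRange.linearMap_apply, Finsupp.mapRange_apply] using this
    set t : N → M := fun v => if v = 0 then 0 else
      (if hv : ∃ x, f x = v then hv.choose else 0) with ht
    have ht0 : t 0 = 0 := by simp [ht]
    have htf : ∀ v, v ∈ Set.range f → f (t v) = v := by
      intro v hv
      by_cases h0 : v = 0
      · simp [ht, h0]
      · obtain ⟨x, hx⟩ := hv
        have hex : ∃ x, f x = v := ⟨x, hx⟩
        simp only [ht, h0, if_false, dif_pos hex]
        exact hex.choose_spec
    refine ⟨Finsupp.mapRange t ht0 y, ?_⟩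
    ext a
    simp only [Finsupp.mapRange.linearMap_apply, Finsupp.mapRange_apply]
    exact htf (y a) ((h (y a)).mp (hya a))
  · rintro ⟨x, rfl⟩
    ext a
    simp only [Finsupp.mapRange.linearMap_apply, Finsupp.mapRange_apply]
    exact h.apply_apply_eq_zero (x a)

lemma hasLeftResLE_finsupp (ι : Type u) (N : Type u) [AddCommGroup N] [Module A N] (n : ℕ)
    (h : HasLeftResLE A (fun G => Module.Projective A G) N n) :
    HasLeftResLE A (fun G => Module.Projective A G) (ι →₀ N) n := by
  classical
  obtain ⟨G, dd, aug, hP, hzero, hsurj, hex0, hex⟩ := h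
  refine ⟨fun i => ModuleCat.of A (ι →₀ G i),
    fun i => ModuleCat.ofHom (Finsupp.mapRange.linearMap (dd i).hom),
    ModuleCat.ofHom (Finsupp.mapRange.linearMap aug.hom),
    fun i => projective_finsupp ι (G i) (hP i),
    fun i hi => ?_, ?_, exact_mapRange _ _ hex0, fun i => exact_mapRange _ _ (hex i)⟩
  · have := hzero i hi
    exact ⟨fun x y => Finsupp.ext fun a => Subsingleton.elim _ _⟩
  · have : Function.Surjective (Finsupp.mapRange (α := ι) (⇑aug) (map_zero _)) :=
      Finsupp.mapRange_surjective _ (map_zero _) hsurj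
    intro y
    obtain ⟨x, hx⟩ := this y
    exact ⟨x, Finsupp.ext fun a => by
      simpa [Finsupp.mapRange.linearMap_apply, Finsupp.mapRange_apply] using
        congrArg (fun z : ι →₀ N => z a) hx⟩

lemma exists_res_of_projDim_ne_top (N : Type u) [AddCommGroup N] [Module A N]
    (h : projDim A N ≠ ⊤) :
    ∃ n : ℕ, HasLeftResLE A (fun G => Module.Projective A G) N n := by
  by_contra hc
  push_neg at hc
  have : {n : ℕ | HasLeftResLE A (fun G => Module.Projective A G) N n} = ∅ := by
    ext n; simpa using hc n
  apply h
  rw [projDim, this]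
  simp

end Finsupp


set_option maxHeartbeats 2000000 in
theorem stmt12 (R E : Type u) [CommRing R] [AddCommGroup E] [Module R E]
    [Module Rᵐᵒᵖ E] [IsCentralScalar R E]
    (M : Type u) [AddCommGroup M] [Module (TrivSqZeroExt R E) M] :
    letI : Module (TrivSqZeroExt R E) R := Module.compHom R (paperEps R E)
    letI : Algebra (TrivSqZeroExt R E) R := (paperEps R E).toAlgebra
    projDim (TrivSqZeroExt R E) R ≠ ⊤ →
    IsGorensteinProjective (TrivSqZeroExt R E) M →
    IsGorensteinProjective R (TensorProduct (TrivSqZeroExt R E) R M) := by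
  letI : Module (TrivSqZeroExt R E) R := Module.compHom R (paperEps R E)
  letI : Algebra (TrivSqZeroExt R E) R := (paperEps R E).toAlgebra
  intro h1 h2
  obtain ⟨P, d, hproj, hexact, hhom, ⟨e⟩⟩ := h2
  set A := TrivSqZeroExt R E with hA
  -- R is good for the complete resolution (P, d)
  obtain ⟨n, hres⟩ := exists_res_of_projDim_ne_top (A := A) R h1
  have hGoodR : IsGood P d R := isGood_of_res P d hproj hexact hhom n R _ _ hres
  -- the base-changed complex
  let T : ℤ → ModuleCat.{u} R := fun i => ModuleCat.of R (TensorProduct A R (P i))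
  let dT : ∀ i : ℤ, T (i + 1) ⟶ T i := fun i =>
    ModuleCat.ofHom (LinearMap.baseChange R (d i).hom)
  have hdT : ∀ i, ⇑(dT i) = ⇑(LinearMap.lTensor R (d i).hom) := fun i =>
    LinearMap.baseChange_eq_ltensor _
  refine ⟨T, dT, ?_, ?_, ?_, ?_⟩
  · intro i
    have := hproj i
    exact Module.Projective.tensorProduct
  · intro i
    rw [hdT, hdT]
    exact hGoodR.1 i
  · -- Hom(T, Q) is exact for every projective R-module Q
    intro Q hQ i
    letI mQA : Module A Q := Module.compHom Q (paperEps R E)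
    -- Q is a good module for (P, d), via being a retract of Q →₀ R
    have hGoodF : IsGood P d ((Q : Type u) →₀ R) :=
      isGood_of_res P d hproj hexact hhom n _ _ _ (hasLeftResLE_finsupp Q R n hres)
    obtain ⟨s0, hs0⟩ := Module.projective_def'.mp hQ
    let sA : (Q : Type u) →ₗ[A] ((Q : Type u) →₀ R) :=
      { toFun := s0
        map_add' := fun x y => map_add s0 x y
        map_smul' := fun a x => by
          show s0 ((paperEps R E) a • x) = a • s0 x
          rw [map_smul]
          exact Finsupp.ext fun q => rfl }
    let rA : ((Q : Type u) →₀ R) →ₗ[A] (Q : Type u) :=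
      { toFun := Finsupp.linearCombination R id
        map_add' := fun x y => map_add _ x y
        map_smul' := fun a x => by
          show Finsupp.linearCombination R id ((a : A) • x) = a • Finsupp.linearCombination R id x
          have hx : (a : A) • x = (paperEps R E a) • x := Finsupp.ext fun q => rfl
          rw [hx, map_smul]
          rfl }
    have hGoodQ : IsGood P d Q :=
      isGood_retract P d sA rA (fun x => LinearMap.congr_fun hs0 x) hGoodF
    -- the adjunction Hom_R(R ⊗_A P_k, Q) ≃ Hom_A(P_k, Q)
    let α : ∀ k : ℤ, ((T k : Type u) →ₗ[R] Q) →+ ((P k : Type u) →ₗ[A] Q) := fun k =>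
      { toFun := fun f =>
          { toFun := fun x => f ((1 : R) ⊗ₜ[A] x)
            map_add' := fun x y => by
              show f ((1 : R) ⊗ₜ[A] (x + y)) = f ((1 : R) ⊗ₜ[A] x) + f ((1 : R) ⊗ₜ[A] y)
              rw [TensorProduct.tmul_add, map_add]
            map_smul' := fun a x => by
              show f ((1 : R) ⊗ₜ[A] (a • x)) = a • f ((1 : R) ⊗ₜ[A] x)
              rw [← TensorProduct.smul_tmul]
              have h2 : (a • (1 : R)) ⊗ₜ[A] x = ((paperEps R E a) • (1 : R)) ⊗ₜ[A] x := rfl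
              rw [h2, ← TensorProduct.smul_tmul', map_smul]
              rfl }
        map_zero' := LinearMap.ext fun x => rfl
        map_add' := fun f g => LinearMap.ext fun x => rfl }
    let bil : ∀ k : ℤ, ((P k : Type u) →ₗ[A] Q) → (R →ₗ[A] ((P k : Type u) →ₗ[A] Q)) :=
      fun k g =>
        { toFun := fun r =>
            { toFun := fun x => r • g x
              map_add' := fun x y => by
                show r • g (x + y) = r • g x + r • g y
                rw [map_add, smul_add]
              map_smul' := fun a x => by
                show r • g (a • x) = a • (r • g x)
                rw [map_smul]
                show r • ((paperEps R E a) • g x) = (paperEps R E a) • (r • g x)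
                rw [smul_comm] }
          map_add' := fun r r' => LinearMap.ext fun x =>
            (by
              show (r + r') • g x = r • g x + r' • g x
              rw [add_smul])
          map_smul' := fun a r => LinearMap.ext fun x => by
            show ((a • r : R)) • g x = a • (r • g x)
            show ((paperEps R E a) * r) • g x = (paperEps R E a) • (r • g x)
            rw [mul_smul] }
    have bil_lift_smul : ∀ (k : ℤ) (g : (P k : Type u) →ₗ[A] Q) (r : R)
        (x : TensorProduct A R (P k)),
        TensorProduct.lift (bil k g) (r • x) = r • TensorProduct.lift (bil k g) x := by
      intro k g r x
      induction x using TensorProduct.induction_on with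
      | zero => rw [smul_zero, map_zero, smul_zero]
      | tmul r' y =>
        rw [TensorProduct.smul_tmul', TensorProduct.lift.tmul, TensorProduct.lift.tmul]
        show (r * r') • g y = r • (r' • g y)
        rw [mul_smul]
      | add x y hx hy => rw [smul_add, map_add, map_add, hx, hy, smul_add]
    let βf : ∀ k : ℤ, ((P k : Type u) →ₗ[A] Q) → ((T k : Type u) →ₗ[R] Q) := fun k g =>
      { toFun := TensorProduct.lift (bil k g)
        map_add' := fun x y => map_add _ x y
        map_smul' := fun r x => bil_lift_smul k g r x }
    have βf_add : ∀ (k : ℤ) (g g' : (P k : Type u) →ₗ[A] Q) (x : TensorProduct A R (P k)),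
        βf k (g + g') x = βf k g x + βf k g' x := by
      intro k g g' x
      induction x using TensorProduct.induction_on with
      | zero =>
        show TensorProduct.lift (bil k (g + g')) 0 = TensorProduct.lift (bil k g) 0 +
          TensorProduct.lift (bil k g') 0
        rw [map_zero, map_zero, map_zero, add_zero]
      | tmul r y =>
        show r • (g + g') y = r • g y + r • g' y
        rw [LinearMap.add_apply, smul_add]
      | add x y hx hy =>
        have h1 : βf k (g + g') (x + y) = βf k (g + g') x + βf k (g + g') y := map_add _ x y
        have h2 : βf k g (x + y) = βf k g x + βf k g y := map_add _ x y
        have h3 : βf k g' (x + y) = βf k g' x + βf k g' y := map_add _ x y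
        rw [h1, h2, h3, hx, hy]
        abel
    have βf_zero : ∀ (k : ℤ) (x : TensorProduct A R (P k)), βf k 0 x = 0 := by
      intro k x
      induction x using TensorProduct.induction_on with
      | zero =>
        show TensorProduct.lift (bil k 0) 0 = 0
        rw [map_zero]
      | tmul r y =>
        show r • (0 : (P k : Type u) →ₗ[A] Q) y = 0
        rw [LinearMap.zero_apply, smul_zero]
      | add x y hx hy =>
        have h1 : βf k 0 (x + y) = βf k 0 x + βf k 0 y := map_add _ x y
        rw [h1, hx, hy, add_zero]
    let β : ∀ k : ℤ, ((P k : Type u) →ₗ[A] Q) →+ ((T k : Type u) →ₗ[R] Q) := fun k =>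
      { toFun := βf k
        map_zero' := LinearMap.ext fun x => βf_zero k x
        map_add' := fun g g' => LinearMap.ext fun x => βf_add k g g' x }
    have hβα : ∀ k (f : (T k : Type u) →ₗ[R] Q), β k (α k f) = f := by
      intro k f
      refine LinearMap.ext fun x => ?_
      induction x using TensorProduct.induction_on with
      | zero => rw [map_zero, map_zero]
      | tmul r y =>
        show r • f ((1 : R) ⊗ₜ[A] y) = f (r ⊗ₜ[A] y)
        rw [← map_smul, TensorProduct.smul_tmul', smul_eq_mul, mul_one]
      | add x y hx hy => rw [map_add, map_add, hx, hy]
    have hαβ : ∀ k (g : (P k : Type u) →ₗ[A] Q), α k (β k g) = g := by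
      intro k g
      refine LinearMap.ext fun x => ?_
      show (1 : R) • g x = g x
      rw [one_smul]
    have hαchar : ∀ k (f : (T k : Type u) →ₗ[R] Q) (x : (P k : Type u)),
        α k f x = f ((1 : R) ⊗ₜ[A] x) := fun _ _ _ => rfl
    -- transfer exactness along the adjunction
    refine exact_retract_fun
      ⇑(LinearMap.lcomp R Q (dT i).hom) ⇑(LinearMap.lcomp R Q (dT (i+1)).hom)
      ⇑(LinearMap.lcomp A Q (d i).hom) ⇑(LinearMap.lcomp A Q (d (i+1)).hom)
      ⇑(α i) ⇑(α (i+1)) ⇑(α (i+1+1)) ⇑(β i) ⇑(β (i+1))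
      (fun f => hβα _ f) ?_ (map_zero (α (i+1+1))) ?_ ?_ ?_ (hGoodQ.2 i)
    · intro f g h
      have := congrArg (β (i+1+1)) h
      rwa [hβα, hβα] at this
    · -- square: α ∘ lcomp dT = lcomp d ∘ α
      intro f
      refine LinearMap.ext fun x => ?_
      show f ((dT i) ((1 : R) ⊗ₜ[A] x)) = (α i f) ((d i) x)
      rw [hαchar]
      congr 1
    · intro f
      refine LinearMap.ext fun x => ?_
      show f ((dT (i+1)) ((1 : R) ⊗ₜ[A] x)) = (α (i+1) f) ((d (i+1)) x)
      rw [hαchar]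
      congr 1
    · -- square: β ∘ lcomp d = lcomp dT ∘ β
      intro g
      refine LinearMap.ext fun x => ?_
      induction x using TensorProduct.induction_on with
      | zero => rw [map_zero, map_zero]
      | tmul r y => rfl
      | add x y hx hy => rw [map_add, map_add, hx, hy]
  · -- the syzygy identification
    let Z : Submodule A (P 0) := LinearMap.range (d 0).hom
    let j : Z →ₗ[A] P 0 := Submodule.subtype Z
    let π : (P (0+1) : Type u) →ₗ[A] Z := (d 0).hom.rangeRestrict
    have hπ : Function.Surjective π := LinearMap.surjective_rangeRestrict _
    have hjπ : j ∘ₗ π = (d 0).hom :=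
      LinearMap.subtype_comp_codRestrict _ _ _
    have hπd : π ∘ₗ (d (0+1)).hom = 0 := by
      ext z
      show j (π ((d (0+1)) z)) = 0
      rw [← LinearMap.comp_apply, hjπ]
      exact (hexact 0).apply_apply_eq_zero z
    have hinj : Function.Injective (LinearMap.baseChange R j) := by
      rw [← LinearMap.ker_eq_bot, LinearMap.ker_eq_bot']
      intro x hx
      rw [LinearMap.baseChange_eq_ltensor] at hx
      obtain ⟨y, rfl⟩ := LinearMap.lTensor_surjective R hπ x
      have hd0 : LinearMap.lTensor R (d 0).hom y = 0 := by
        rw [← hjπ, LinearMap.lTensor_comp, LinearMap.comp_apply]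
        exact hx
      obtain ⟨w, rfl⟩ := (hGoodR.1 0 y).mp hd0
      rw [← LinearMap.comp_apply, ← LinearMap.lTensor_comp, hπd, LinearMap.lTensor_zero]
      rfl
    have hfact : ∀ y, (dT 0) y = LinearMap.baseChange R j (LinearMap.lTensor R π y) := by
      intro y
      rw [LinearMap.baseChange_eq_ltensor]
      conv_rhs => rw [← LinearMap.comp_apply, ← LinearMap.lTensor_comp, hjπ]
      exact congrFun (hdT 0) y
    have hrange : LinearMap.range (LinearMap.baseChange R j) =
        LinearMap.range (dT 0).hom := by
      ext z
      constructor
      · rintro ⟨x, rfl⟩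
        obtain ⟨y, rfl⟩ := LinearMap.lTensor_surjective R hπ x
        exact ⟨y, hfact y⟩
      · rintro ⟨y, rfl⟩
        exact ⟨LinearMap.lTensor R π y, (hfact y).symm⟩
    exact ⟨((LinearEquiv.baseChange A R _ _ e).trans
      (LinearEquiv.ofInjective (LinearMap.baseChange R j) hinj)).trans
      (LinearEquiv.ofEq _ _ hrange)⟩
end
end

section
/- Let R be a commutative ring and E an R-module such that R has finite projective dimension as an R⋉E-module. If M is a Gorenstein projective R⋉E-module, then Tor_i^{R⋉E}(M, R) = 0 for all i > 0. -/
open CategoryTheory TrivSqZeroExt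

noncomputable section

universe u

section Stmt13Aux

open CategoryTheory.Limits

variable {A : Type u} [CommRing A]

/-- The functor tensoring a chain complex on the left by a fixed module. -/
abbrev Stmt13TT (X : ModuleCat.{u} A) :
    HomologicalComplex (ModuleCat.{u} A) (ComplexShape.down ℕ) ⥤
      HomologicalComplex (ModuleCat.{u} A) (ComplexShape.down ℕ) :=
  Functor.mapHomologicalComplex ((MonoidalCategory.tensoringLeft (ModuleCat.{u} A)).obj X) _

lemma stmt13_TT_exactAt (X : ModuleCat.{u} A) [Module.Flat A X]
    (K : ChainComplex (ModuleCat.{u} A) ℕ) (m : ℕ)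
    (hK : K.ExactAt (m + 1)) : ((Stmt13TT X).obj K).ExactAt (m + 1) := by
  rw [K.exactAt_iff' (m + 2) (m + 1) m (by simp) (by simp)] at hK
  rw [HomologicalComplex.exactAt_iff' _ (m + 2) (m + 1) m (by simp) (by simp)]
  rw [ShortComplex.ShortExact.moduleCat_exact_iff_function_exact] at hK ⊢
  exact Module.Flat.lTensor_exact X hK

lemma stmt13_isZero_homology_TT_of_iso {X Y : ModuleCat.{u} A} (e : X ≅ Y)
    (K : ChainComplex (ModuleCat.{u} A) ℕ) (i : ℕ)
    (h : IsZero (((Stmt13TT Y).obj K).homology i)) :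
    IsZero (((Stmt13TT X).obj K).homology i) :=
  h.of_iso ((HomologicalComplex.homologyFunctor _ _ i).mapIso
    ((NatIso.mapHomologicalComplex
      ((MonoidalCategory.tensoringLeft (ModuleCat.{u} A)).mapIso e) _).app K))

/-- The map of tensored complexes induced by a module map. -/
abbrev Stmt13TTmap {X Y : ModuleCat.{u} A} (f : X ⟶ Y)
    (K : ChainComplex (ModuleCat.{u} A) ℕ) : (Stmt13TT X).obj K ⟶ (Stmt13TT Y).obj K :=
  (NatTrans.mapHomologicalComplex
    ((MonoidalCategory.tensoringLeft (ModuleCat.{u} A)).map f) _).app K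

/-- Dimension shifting: the homology of the tensor product of a syzygy of a complete
projective resolution with a finite flat resolution vanishes in positive degrees. -/
lemma stmt13_core (K : ChainComplex (ModuleCat.{u} A) ℕ) (n : ℕ)
    (hKflat : ∀ j : ℕ, Module.Flat A (K.X j))
    (hKz : ∀ j : ℕ, n < j → Subsingleton (K.X j))
    (hKex : ∀ j : ℕ, K.ExactAt (j + 1)) :
    ∀ (c : ℕ) (P : ℤ → ModuleCat.{u} A) (dm : ∀ i : ℤ, P (i + 1) ⟶ P i)
      (_ : ∀ i, Module.Projective A (P i))
      (_ : ∀ i, Function.Exact (dm (i + 1)) (dm i))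
      (j : ℤ) (i : ℕ), 1 ≤ i → n < i + c →
      IsZero (((Stmt13TT (ModuleCat.of A (LinearMap.range (dm j).hom))).obj K).homology i) := by
  intro c
  induction c with
  | zero =>
    intro P dm _ _ j i h1 h2
    rw [← HomologicalComplex.exactAt_iff_isZero_homology]
    refine ShortComplex.exact_of_isZero_X₂ _ ?_
    haveI : Subsingleton (K.X i) := hKz i (by omega)
    exact (((MonoidalCategory.tensoringLeft
      (ModuleCat.{u} A)).obj _).map_isZero (ModuleCat.isZero_of_subsingleton (K.X i)))
  | succ c ih =>
    intro P dm hproj hex j i h1 h2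
    obtain ⟨k, rfl⟩ : ∃ k, j = k + 1 := ⟨j - 1, by ring⟩
    set M₁ : ModuleCat.{u} A := ModuleCat.of A (LinearMap.range (dm (k + 1)).hom) with hM₁
    set X₃ : ModuleCat.{u} A :=
      ModuleCat.of A (P (k + 1) ⧸ LinearMap.range (dm (k + 1)).hom) with hX₃
    letI : Module.Projective A (P (k + 1)) := hproj (k + 1)
    set f : M₁ ⟶ P (k + 1) := ModuleCat.ofHom (LinearMap.range (dm (k + 1)).hom).subtype with hf
    set g : P (k + 1) ⟶ X₃ :=
      ModuleCat.ofHom (LinearMap.range (dm (k + 1)).hom).mkQ with hg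
    have hfg : Function.Exact f g := LinearMap.exact_subtype_mkQ _
    set S : ShortComplex (HomologicalComplex (ModuleCat.{u} A) (ComplexShape.down ℕ)) :=
      ShortComplex.mk (Stmt13TTmap f K) (Stmt13TTmap g K) (by
        ext m : 1
        apply ModuleCat.hom_ext
        apply LinearMap.ext
        intro x
        have h0 : (LinearMap.rTensor (K.X m) g.hom).comp (LinearMap.rTensor (K.X m) f.hom) = 0 := by
          rw [← LinearMap.rTensor_comp]
          have h1 : g.hom ∘ₗ f.hom = 0 :=
            LinearMap.ext fun y => hfg.apply_apply_eq_zero y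
          rw [h1, LinearMap.rTensor_zero]
        exact congrArg (fun φ => φ x) h0) with hS
    have hSE : S.ShortExact := by
      apply HomologicalComplex.shortExact_of_degreewise_shortExact
      intro m
      letI := hKflat m
      refine ShortComplex.ShortExact.mk' ?_ ?_ ?_
      · rw [ShortComplex.ShortExact.moduleCat_exact_iff_function_exact]
        exact Module.Flat.rTensor_exact (K.X m) hfg
      · rw [ModuleCat.mono_iff_injective]
        exact Module.Flat.rTensor_preserves_injective_linearMap _
          (Submodule.injective_subtype _)
      · rw [ModuleCat.epi_iff_surjective]
        exact LinearMap.rTensor_surjective _ (Submodule.mkQ_surjective _)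
    have hij : (ComplexShape.down ℕ).Rel (i + 1) i := by simp
    have les := hSE.homology_exact₁ (i + 1) i hij
    have e3 : X₃ ≅ ModuleCat.of A (LinearMap.range (dm k).hom) := by
      refine LinearEquiv.toModuleIso ?_
      refine (Submodule.quotEquivOfEq _ _ ?_).trans (dm k).hom.quotKerEquivRange
      exact (LinearMap.exact_iff.mp (hex k)).symm
    have hz3 : IsZero (S.X₃.homology (i + 1)) := by
      refine stmt13_isZero_homology_TT_of_iso e3 K (i + 1) ?_
      exact ih P dm hproj hex k (i + 1) (by omega) (by omega)
    have hz2 : IsZero (S.X₂.homology i) := by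
      obtain ⟨m, rfl⟩ : ∃ m, i = m + 1 := ⟨i - 1, by omega⟩
      rw [← HomologicalComplex.exactAt_iff_isZero_homology]
      exact stmt13_TT_exactAt (P (k + 1)) K m (hKex m)
    exact les.isZero_X₂ (hz3.eq_of_src _ _) (hz2.eq_of_tgt _ _)

/-- A finite resolution by projective modules gives rise to a bundled
projective resolution whose complex vanishes in large degrees. -/
lemma stmt13_exists_res (N : Type u) [AddCommGroup N] [Module A N] (n : ℕ)
    (h : HasLeftResLE A (fun N => Module.Projective A N) N n) :
    ∃ Res : ProjectiveResolution (ModuleCat.of A N),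
      (∀ j : ℕ, Module.Projective A (Res.complex.X j)) ∧
      (∀ j : ℕ, n < j → Subsingleton (Res.complex.X j)) := by
  obtain ⟨G, dG, aug, hP, hz, hsurj, hex0, hexG⟩ := h
  have sq : ∀ m : ℕ, dG (m + 1) ≫ dG m = 0 := fun m =>
    by ext x; exact (hexG m).apply_apply_eq_zero x
  set K : ChainComplex (ModuleCat.{u} A) ℕ := ChainComplex.of G dG sq with hK
  have hd : ∀ m : ℕ, K.d (m + 1) m = dG m := fun m => ChainComplex.of_d G dG m
  have h10 : K.d 1 0 ≫ aug = 0 := by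
    rw [hd 0]; ext x; exact hex0.apply_apply_eq_zero x
  set π : K ⟶ (ChainComplex.single₀ _).obj (ModuleCat.of A N) :=
    (ChainComplex.toSingle₀Equiv K (ModuleCat.of A N)).symm ⟨aug, h10⟩ with hπ
  have hπ0 : π.f 0 = aug := ChainComplex.toSingle₀Equiv_symm_apply_f_zero _ _
  have hexK : ∀ m : ℕ, K.ExactAt (m + 1) := by
    intro m
    rw [K.exactAt_iff' (m + 2) (m + 1) m (by simp) (by simp),
      ShortComplex.ShortExact.moduleCat_exact_iff_function_exact,
      show (K.sc' (m + 2) (m + 1) m).f = dG (m + 1) from ChainComplex.of_d G dG (m + 1),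
      show (K.sc' (m + 2) (m + 1) m).g = dG m from ChainComplex.of_d G dG m]
    exact hexG m
  have hqis : QuasiIso π := by
    constructor
    intro m
    cases m with
    | zero =>
      rw [ChainComplex.quasiIsoAt₀_iff, ShortComplex.quasiIso_iff_of_zeros']
      rotate_left
      · rfl
      · rfl
      · rfl
      constructor
      · rw [ShortComplex.ShortExact.moduleCat_exact_iff_function_exact]
        show Function.Exact (K.d 1 0) (π.f 0)
        rw [hd 0, hπ0]
        exact hex0
      · show Epi (π.f 0)
        rw [hπ0]
        exact (ModuleCat.epi_iff_surjective aug).mpr hsurj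
    | succ m =>
      rw [quasiIsoAt_iff_exactAt']
      · exact hexK m
      · apply ChainComplex.exactAt_succ_single_obj
  refine ⟨⟨K, fun m => (IsProjective.iff_projective _).mp (hP m), π, hqis⟩, hP, hz⟩

/-- The main result, for an arbitrary commutative ring. -/
theorem stmt13_main (N : Type u) [AddCommGroup N] [Module A N] (hN : projDim A N ≠ ⊤)
    (M : Type u) [AddCommGroup M] [Module A M] (hM : IsGorensteinProjective A M)
    (i : ℕ) (hi : 0 < i) :
    IsZero (((Tor (ModuleCat.{u} A) i).obj (ModuleCat.of A M)).obj (ModuleCat.of A N)) := by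
  have hne : {n : ℕ | HasLeftResLE A (fun N => Module.Projective A N) N n}.Nonempty := by
    rw [Set.nonempty_iff_ne_empty]
    intro h
    exact hN (by rw [projDim, h, Set.image_empty, sInf_empty])
  obtain ⟨n, hn⟩ := hne
  obtain ⟨Res, hRp, hRz⟩ := stmt13_exists_res N n hn
  obtain ⟨P, dm, hproj, hex, -, ⟨e⟩⟩ := hM
  have hflat : ∀ j : ℕ, Module.Flat A (Res.complex.X j) := fun j => by
    haveI := hRp j
    infer_instance
  refine IsZero.of_iso ?_ (Res.isoLeftDerivedObj
    ((MonoidalCategory.tensoringLeft (ModuleCat.{u} A)).obj (ModuleCat.of A M)) i)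
  refine stmt13_isZero_homology_TT_of_iso (LinearEquiv.toModuleIso e) Res.complex i ?_
  exact stmt13_core Res.complex n hflat hRz (fun m => Res.complex_exactAt_succ m) n
    P dm hproj hex 0 i hi (by omega)

end Stmt13Aux

theorem stmt13 (R E : Type u) [CommRing R] [AddCommGroup E] [Module R E]
    [Module Rᵐᵒᵖ E] [IsCentralScalar R E]
    (M : Type u) [AddCommGroup M] [Module (TrivSqZeroExt R E) M] :
    letI : Module (TrivSqZeroExt R E) R := Module.compHom R (paperEps R E)
    projDim (TrivSqZeroExt R E) R ≠ ⊤ →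
    IsGorensteinProjective (TrivSqZeroExt R E) M →
    ∀ i : ℕ, 0 < i →
      Limits.IsZero (((Tor (ModuleCat.{u} (TrivSqZeroExt R E)) i).obj
        (ModuleCat.of (TrivSqZeroExt R E) M)).obj
        (ModuleCat.of (TrivSqZeroExt R E) R)) := by
  intro hpd hGP i hi
  letI : Module (TrivSqZeroExt R E) R := Module.compHom R (paperEps R E)
  exact stmt13_main R hpd M hGP i hi
end
end
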